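/- In a Euclidean Hurwitz algebra, suppose u, v, w are unit vectors such that {1, u, v, u·v, w} is an orthonormal set. Then the eight vectors 1, u, v, u·v, w, u·w, v·w, (u·v)·w form an orthonormal set. -/

import Mathlib

open RealInnerProductSpace

set_option maxHeartbeats 2000000 in
theorem stmt_9 {A : Type*} [NormedAddCommGroup A] [InnerProductSpace ℝ A]
    (mul : A →ₗ[ℝ] A →ₗ[ℝ] A) (e : A) (he : ‖e‖ = 1)
    (hul : ∀ x, mul e x = x) (hur : ∀ x, mul x e = x)
    (hmon : ∀ x y, ‖mul x y‖ = ‖x‖ * ‖y‖)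
    (u v w : A)
    (h5 : Orthonormal ℝ ![e, u, v, mul u v, w]) :
    Orthonormal ℝ
      ![e, u, v, mul u v, w, mul u w, mul v w, mul (mul u v) w] := by
  have sy : ∀ a b : A, ⟪a, b⟫ = 0 → ⟪b, a⟫ = 0 := fun a b h => by
    rw [real_inner_comm]; exact h
  have hL0 : ∀ x y : A, ⟪mul x y, mul x y⟫ = ⟪x, x⟫ * ⟪y, y⟫ := by
    intro x y
    rw [real_inner_self_eq_norm_mul_norm, real_inner_self_eq_norm_mul_norm,
      real_inner_self_eq_norm_mul_norm, hmon]
    ring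
  have hL : ∀ x y z : A, ⟪mul x y, mul x z⟫ = ⟪x, x⟫ * ⟪y, z⟫ := by
    intro x y z
    have h := hL0 x (y + z)
    simp only [map_add, inner_add_left, inner_add_right, hL0] at h
    have h1 := real_inner_comm (mul x y) (mul x z)
    have h2 := real_inner_comm y z
    linear_combination h / 2 - h1 / 2 + (inner ℝ x x : ℝ) / 2 * h2
  have hE : ∀ a b c d : A, ⟪mul a b, mul c d⟫ + ⟪mul c b, mul a d⟫
      = 2 * ⟪a, c⟫ * ⟪b, d⟫ := by
    intro a b c d
    have h := hL (a + c) b d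
    simp only [map_add, LinearMap.add_apply, inner_add_left, inner_add_right, hL] at h
    have h1 := real_inner_comm a c
    linear_combination h + (inner ℝ b d : ℝ) * h1
  have hR : ∀ x y z : A, ⟪mul x z, mul y z⟫ = ⟪x, y⟫ * ⟪z, z⟫ := by
    intro x y z
    have h := hE x z y z
    have h1 := real_inner_comm (mul y z) (mul x z)
    linarith
  have hSq : ∀ x z : A, ⟪mul x x, z⟫ = 2 * ⟪x, e⟫ * ⟪x, z⟫ - ⟪x, x⟫ * ⟪z, e⟫ := by
    intro x z
    have h := hE x x z e
    rw [hur, hur] at h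
    have h2 : ⟪mul z x, x⟫ = ⟪z, e⟫ * ⟪x, x⟫ := by
      have := hR z e x; rwa [hul] at this
    linear_combination h - h2
  have hXy : ∀ a b c : A, ⟪mul a b, c⟫ = 2 * ⟪a, e⟫ * ⟪b, c⟫ - ⟪b, mul a c⟫ := by
    intro a b c
    have h := hE a b e c
    rw [hul, hul] at h
    linarith
  -- facts from h5
  have o5 := orthonormal_iff_ite.mp h5
  have d0 : ⟪e, e⟫ = 1 := by simpa using o5 0 0
  have d1 : ⟪u, u⟫ = 1 := by simpa using o5 1 1
  have d2 : ⟪v, v⟫ = 1 := by simpa using o5 2 2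
  have d3 : ⟪mul u v, mul u v⟫ = 1 := by simpa using o5 3 3
  have d4 : ⟪w, w⟫ = 1 := by simpa using o5 4 4
  have z01 : ⟪e, u⟫ = 0 := by simpa using o5 0 1
  have z02 : ⟪e, v⟫ = 0 := by simpa using o5 0 2
  have z03 : ⟪e, mul u v⟫ = 0 := by simpa using o5 0 3
  have z04 : ⟪e, w⟫ = 0 := by simpa using o5 0 4
  have z12 : ⟪u, v⟫ = 0 := by simpa using o5 1 2
  have z13 : ⟪u, mul u v⟫ = 0 := by simpa using o5 1 3
  have z14 : ⟪u, w⟫ = 0 := by simpa using o5 1 4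
  have z23 : ⟪v, mul u v⟫ = 0 := by simpa using o5 2 3
  have z24 : ⟪v, w⟫ = 0 := by simpa using o5 2 4
  have z34 : ⟪mul u v, w⟫ = 0 := by simpa using o5 3 4
  -- inner products of u*w with the first five
  have n5e : ⟪mul u w, e⟫ = 0 := by
    have h := hXy u w e; rw [hur] at h
    rw [sy e u z01, sy e w z04, sy u w z14] at h; linarith
  have n5u : ⟪mul u w, u⟫ = 0 := by
    have h := hL u w e; rw [hur] at h
    rw [sy e w z04, mul_zero] at h; exact h
  have n5v : ⟪mul u w, v⟫ = 0 := by
    have h := hXy u w v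
    rw [sy e u z01, sy (mul u v) w z34] at h; linarith
  have n5p : ⟪mul u w, mul u v⟫ = 0 := by
    have h := hL u w v
    rw [sy v w z24, mul_zero] at h; exact h
  have n5w : ⟪mul u w, w⟫ = 0 := by
    have h := hR u e w; rw [hul] at h
    rw [sy e u z01, zero_mul] at h; exact h
  -- inner products of v*w with the first five
  have n6e : ⟪mul v w, e⟫ = 0 := by
    have h := hXy v w e; rw [hur] at h
    rw [sy e v z02, sy e w z04, sy v w z24] at h; linarith
  have n6u : ⟪mul v w, u⟫ = 0 := by
    have h := hE v w u e; rw [hur, hur] at h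
    rw [n5v, sy u v z12, sy e w z04] at h; linarith
  have n6v : ⟪mul v w, v⟫ = 0 := by
    have h := hL v w e; rw [hur] at h
    rw [sy e w z04, mul_zero] at h; exact h
  have n6p : ⟪mul v w, mul u v⟫ = 0 := by
    have hvv : ⟪mul v v, mul u w⟫ = 0 := by
      have h := hSq v (mul u w)
      rw [sy e v z02, n5e] at h; linarith
    have h := hE v w u v
    rw [sy (mul v v) (mul u w) hvv, sy u v z12, sy v w z24] at h; linarith
  have n6w : ⟪mul v w, w⟫ = 0 := by
    have h := hR v e w; rw [hul] at h
    rw [sy e v z02, zero_mul] at h; exact h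
  have n65 : ⟪mul u w, mul v w⟫ = 0 := by
    have h := hR u v w
    rw [z12, zero_mul] at h; exact h
  -- inner products of (u*v)*w with the rest
  have n7e : ⟪mul (mul u v) w, e⟫ = 0 := by
    have h := hXy (mul u v) w e; rw [hur] at h
    rw [sy e (mul u v) z03, sy e w z04, sy (mul u v) w z34] at h; linarith
  have n7u : ⟪mul (mul u v) w, u⟫ = 0 := by
    have hwv_e : ⟪mul w v, e⟫ = 0 := by
      have h := hXy w v e; rw [hur] at h
      rw [sy e w z04, sy e v z02, z24] at h; linarith
    have hwu_p : ⟪mul w u, mul u v⟫ = 0 := by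
      have huu : ⟪mul u u, mul w v⟫ = 0 := by
        have h := hSq u (mul w v)
        rw [sy e u z01, hwv_e] at h; linarith
      have h := hE w u u v
      rw [huu, sy u w z14, z12] at h; linarith
    have hpu_w : ⟪mul (mul u v) u, w⟫ = 0 := by
      have h := hE (mul u v) u w e; rw [hur, hur] at h
      rw [hwu_p, z34, sy e u z01] at h; linarith
    have h := hXy (mul u v) w u
    rw [sy e (mul u v) z03, sy (mul (mul u v) u) w hpu_w] at h; linarith
  have n7v : ⟪mul (mul u v) w, v⟫ = 0 := by
    have hwv_p : ⟪mul w v, mul u v⟫ = 0 := by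
      have h := hE w v u v
      have h1 := real_inner_comm (mul u v) (mul w v)
      rw [sy u w z14] at h
      linarith
    have hpv_w : ⟪mul (mul u v) v, w⟫ = 0 := by
      have h := hE (mul u v) v w e; rw [hur, hur] at h
      rw [hwv_p, z34, sy e v z02] at h; linarith
    have h := hXy (mul u v) w v
    rw [sy e (mul u v) z03, sy (mul (mul u v) v) w hpv_w] at h; linarith
  have n7p : ⟪mul (mul u v) w, mul u v⟫ = 0 := by
    have h := hL (mul u v) w e; rw [hur] at h
    rw [sy e w z04, mul_zero] at h; exact h
  have n7w : ⟪mul (mul u v) w, w⟫ = 0 := by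
    have h := hR (mul u v) e w; rw [hul] at h
    rw [sy e (mul u v) z03, zero_mul] at h; exact h
  have n75 : ⟪mul (mul u v) w, mul u w⟫ = 0 := by
    have h := hR (mul u v) u w
    rw [sy u (mul u v) z13, zero_mul] at h; exact h
  have n76 : ⟪mul (mul u v) w, mul v w⟫ = 0 := by
    have h := hR (mul u v) v w
    rw [sy v (mul u v) z23, zero_mul] at h; exact h
  -- diagonal entries for the new vectors
  have d5 : ⟪mul u w, mul u w⟫ = 1 := by rw [hL0, d1, d4]; norm_num
  have d6 : ⟪mul v w, mul v w⟫ = 1 := by rw [hL0, d2, d4]; norm_num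
  have d7 : ⟪mul (mul u v) w, mul (mul u v) w⟫ = 1 := by rw [hL0, d3, d4]; norm_num
  have E5 : (![e, u, v, mul u v, w, mul u w, mul v w, mul (mul u v) w] : Fin 8 → A) 5
      = mul u w := rfl
  have E6 : (![e, u, v, mul u v, w, mul u w, mul v w, mul (mul u v) w] : Fin 8 → A) 6
      = mul v w := rfl
  have E7 : (![e, u, v, mul u v, w, mul u w, mul v w, mul (mul u v) w] : Fin 8 → A) 7
      = mul (mul u v) w := rfl
  have nu : ‖u‖ = 1 := by simpa using h5.1 1
  have nv : ‖v‖ = 1 := by simpa using h5.1 2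
  have nw : ‖w‖ = 1 := by simpa using h5.1 4
  rw [orthonormal_iff_ite]
  intro i j
  fin_cases i <;> fin_cases j <;>
    simp [E5, E6, E7, he, hmon, nu, nv, nw, d0, d1, d2, d3, d4, d5, d6, d7,
      z01, z02, z03, z04, z12, z13, z14, z23, z24, z34,
      n5e, n5u, n5v, n5p, n5w, n6e, n6u, n6v, n6p, n6w, n65,
      n7e, n7u, n7v, n7p, n7w, n75, n76,
      sy e u z01, sy e v z02, sy e (mul u v) z03, sy e w z04,
      sy u v z12, sy u (mul u v) z13, sy u w z14,
      sy v (mul u v) z23, sy v w z24, sy (mul u v) w z34,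
      sy (mul u w) e n5e, sy (mul u w) u n5u, sy (mul u w) v n5v,
      sy (mul u w) (mul u v) n5p, sy (mul u w) w n5w,
      sy (mul v w) e n6e, sy (mul v w) u n6u, sy (mul v w) v n6v,
      sy (mul v w) (mul u v) n6p, sy (mul v w) w n6w,
      sy (mul u w) (mul v w) n65,
      sy (mul (mul u v) w) e n7e, sy (mul (mul u v) w) u n7u,
      sy (mul (mul u v) w) v n7v, sy (mul (mul u v) w) (mul u v) n7p,
      sy (mul (mul u v) w) w n7w, sy (mul (mul u v) w) (mul u w) n75,
      sy (mul (mul u v) w) (mul v w) n76]
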